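/- For ν > −1/2 and real z, G_ν(z²) = (1/(4^ν Γ(ν + 1/2))) ∫_{−1}^{1} (1 − s²)^{ν − 1/2} e^{izs} ds, where G_ν is defined by the power series G_ν(w) = 4^{−ν}√π ∑_{m≥0} (−1)^m (w/4)^m/(m! Γ(ν+m+1)). -/

import Mathlib

open MeasureTheory Real Set intervalIntegral

lemma Gamma_nat_add_half (m : ℕ) :
    Real.Gamma ((m : ℝ) + 1/2) = (2*m).factorial * Real.sqrt π / (4^m * m.factorial) := by
  induction m with
  | zero =>
    rw [show ((0:ℕ):ℝ)+1/2 = 1/2 by norm_num, Real.Gamma_one_half_eq]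
    norm_num
  | succ n ih =>
    have h : ((n:ℝ) + 1 + 1/2) = ((n:ℝ) + 1/2) + 1 := by ring
    have hne : ((n:ℝ) + 1/2) ≠ 0 := by positivity
    rw [Nat.cast_succ, h, Real.Gamma_add_one hne, ih]
    have h4 : (4:ℝ)^n ≠ 0 := by positivity
    have hf : (n.factorial : ℝ) ≠ 0 := Nat.cast_ne_zero.mpr n.factorial_ne_zero
    have e1 : (2*(n+1)) = (2*n+1)+1 := by ring
    rw [e1, Nat.factorial_succ, Nat.factorial_succ, Nat.factorial_succ]
    push_cast
    field_simp
    ring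

section

variable {ν : ℝ} (hν : -(1/2) < ν)

lemma cInt (hν : -(1/2) < ν) :
    IntervalIntegrable (fun s : ℝ => (1 - s^2) ^ (ν - 1/2)) volume (-1) 1 := by
  set p := ν - 1/2 with hp
  have hp1 : (-1:ℝ) < p := by rw [hp]; linarith
  have h1 : IntervalIntegrable (fun x : ℝ => x ^ p) volume 0 1 :=
    intervalIntegrable_rpow' hp1
  have h2 : IntervalIntegrable (fun x : ℝ => (1 - x) ^ p) volume 0 1 := by
    simpa using (h1.comp_sub_left 1).symm
  have hcont : ContinuousOn (fun x : ℝ => (1 + x) ^ p) (Set.uIcc 0 1) := by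
    apply ContinuousOn.rpow_const (by fun_prop)
    intro x hx
    rw [Set.uIcc_of_le (by norm_num : (0:ℝ) ≤ 1)] at hx
    exact Or.inl (by nlinarith [hx.1])
  have h3 : IntervalIntegrable (fun x : ℝ => (1 - x) ^ p * (1 + x) ^ p) volume 0 1 :=
    h2.mul_continuousOn hcont
  have h4 : IntervalIntegrable (fun x : ℝ => (1 - x^2) ^ p) volume 0 1 := by
    rw [intervalIntegrable_iff] at h3 ⊢
    refine h3.congr_fun (fun x hx => ?_) measurableSet_uIoc
    rw [Set.uIoc_of_le (by norm_num : (0:ℝ) ≤ 1)] at hx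
    beta_reduce
    rw [← Real.mul_rpow (by nlinarith [hx.2]) (by nlinarith [hx.1])]
    ring_nf
  have h5 : IntervalIntegrable (fun x : ℝ => (1 - x^2) ^ p) volume (-1) 0 := by
    have := (IntervalIntegrable.iff_comp_neg
      (f := fun x : ℝ => (1 - x^2) ^ p) (a := -1) (b := 0)).mpr
    simp only [neg_neg, neg_zero, neg_sq] at this
    exact this h4.symm
  exact h5.trans h4

lemma cMomInt (hν : -(1/2) < ν) (g : ℝ → ℂ) (hg : Continuous g) :
    IntervalIntegrable (fun s : ℝ => (((1 - s^2) ^ (ν - 1/2) : ℝ) : ℂ) * g s)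
      volume (-1) 1 := by
  have h0 : IntervalIntegrable (fun s : ℝ => (((1 - s^2) ^ (ν - 1/2) : ℝ) : ℂ))
      volume (-1) 1 := by
    have := cInt hν
    rw [intervalIntegrable_iff] at this ⊢
    exact (Complex.ofRealCLM : ℝ →L[ℝ] ℂ).integrable_comp this
  exact h0.mul_continuousOn hg.continuousOn

end

open Complex in

-- pointwise substitution identity
lemma subst_ptwise (ν : ℝ) (m : ℕ) (x : ℝ) (hx0 : 0 < x) (hx1 : x ≤ 1) :
    (2*x : ℝ) • ((((x^2 : ℝ):ℂ)) ^ ((((m:ℝ) + 1/2 : ℝ):ℂ) - 1) *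
        (1 - ((x^2:ℝ):ℂ)) ^ ((((ν + 1/2 : ℝ)):ℂ) - 1))
      = (((1 - x^2)^(ν-1/2) : ℝ) : ℂ) * (2 * (x:ℂ)^(2*m)) := by
  have hx2 : (0:ℝ) ≤ x^2 := sq_nonneg x
  have h1x : (0:ℝ) ≤ 1 - x^2 := by nlinarith
  have e1 : (((m:ℝ) + 1/2 : ℝ):ℂ) - 1 = (((m:ℝ) - 1/2 : ℝ):ℂ) := by push_cast; ring
  have e2 : ((((ν + 1/2 : ℝ)):ℂ)) - 1 = (((ν - 1/2 : ℝ):ℂ)) := by push_cast; ring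
  have e3 : (1 : ℂ) - ((x^2:ℝ):ℂ) = (((1 - x^2 : ℝ)):ℂ) := by push_cast; ring
  rw [e1, e2, e3, ← Complex.ofReal_cpow hx2, ← Complex.ofReal_cpow h1x]
  have e4 : (x^2) ^ ((m:ℝ) - 1/2) = x ^ (2*(m:ℝ) - 1) := by
    rw [← Real.rpow_natCast x 2, ← Real.rpow_mul hx0.le]
    ring_nf
  have e5 : (2*x) * (x ^ (2*(m:ℝ) - 1)) = 2 * x ^ (2*m : ℕ) := by
    rw [← Real.rpow_natCast x (2*m)]
    rw [show (2*x) * (x ^ (2*(m:ℝ) - 1)) = 2 * (x ^ (1:ℝ) * x ^ (2*(m:ℝ) - 1)) by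
      rw [Real.rpow_one]; ring]
    rw [← Real.rpow_add hx0]
    norm_num
  have e6 : (2*x) * ((x ^ (2*(m:ℝ) - 1)) * ((1-x^2)^(ν-1/2))) =
      ((1-x^2)^(ν-1/2)) * (2 * x^(2*m)) := by rw [← mul_assoc, e5]; ring
  rw [Complex.real_smul, e4]
  exact_mod_cast e6

lemma moment_even {ν : ℝ} (hν : -(1/2) < ν) (m : ℕ) :
    ∫ s in (-1:ℝ)..1, (((1 - s^2)^(ν-1/2) : ℝ):ℂ) * (s:ℂ)^(2*m)
      = ((Real.Gamma ((m:ℝ)+1/2) * Real.Gamma (ν+1/2) / Real.Gamma (ν+(m:ℝ)+1) : ℝ) : ℂ) := by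
  set u : ℂ := (((m:ℝ)+1/2 : ℝ):ℂ) with hu_def
  set v : ℂ := ((ν+1/2 : ℝ):ℂ) with hv_def
  have hu : 0 < u.re := by simp [hu_def]; positivity
  have hv : 0 < v.re := by simp [hv_def]; linarith
  set g : ℝ → ℂ := fun t => (t:ℂ)^(u-1) * (1-(t:ℂ))^(v-1) with hg_def
  set F : ℝ → ℂ := fun s => (((1 - s^2)^(ν-1/2) : ℝ):ℂ) * (s:ℂ)^(2*m) with hF_def
  have hint : IntervalIntegrable F volume (-1) 1 :=
    cMomInt hν (fun s => (s:ℂ)^(2*m)) (by fun_prop)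
  have hFR : IntervalIntegrable (fun s => (((1 - s^2)^(ν-1/2) : ℝ):ℂ) * (2*(s:ℂ)^(2*m)))
      volume (-1) 1 := cMomInt hν (fun s => 2*(s:ℂ)^(2*m)) (by fun_prop)
  -- even symmetry
  have heven : ∫ s in (-1:ℝ)..0, F s = ∫ s in (0:ℝ)..1, F s := by
    have h := intervalIntegral.integral_comp_neg (a := (0:ℝ)) (b := 1) (f := F)
    simp only [neg_zero] at h
    rw [← h]
    apply intervalIntegral.integral_congr
    intro x _
    show (((1 - (-x)^2)^(ν-1/2) : ℝ):ℂ) * (((-x : ℝ)):ℂ)^(2*m) = _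
    rw [neg_sq]
    push_cast
    rw [Even.neg_pow (even_two_mul m)]
  have hsplit : ∫ s in (-1:ℝ)..1, F s = (∫ s in (-1:ℝ)..0, F s) + ∫ s in (0:ℝ)..1, F s :=
    (intervalIntegral.integral_add_adjacent_intervals
      (hint.mono_set (by rw [Set.uIcc_of_le (by norm_num : (-1:ℝ) ≤ 0),
        Set.uIcc_of_le (by norm_num : (-1:ℝ) ≤ 1)]; exact Set.Icc_subset_Icc le_rfl (by norm_num)))
      (hint.mono_set (by rw [Set.uIcc_of_le (by norm_num : (0:ℝ) ≤ 1),
        Set.uIcc_of_le (by norm_num : (-1:ℝ) ≤ 1)]; exact Set.Icc_subset_Icc (by norm_num) le_rfl))).symm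
  -- the substitution
  have him : ((fun x : ℝ => x^2) '' Set.uIcc 0 1) ⊆ Set.Icc (0:ℝ) 1 := by
    rintro y ⟨x, hx, rfl⟩
    rw [Set.uIcc_of_le (by norm_num : (0:ℝ) ≤ 1)] at hx
    refine ⟨by positivity, ?_⟩
    show x^2 ≤ 1
    nlinarith [hx.1, hx.2]
  have hbeta_int : IntegrableOn g (Set.Icc (0:ℝ) 1) :=
    (intervalIntegrable_iff_integrableOn_Icc_of_le (by norm_num)).mp
      (Complex.betaIntegral_convergent hu hv)
  have hsub : (∫ x in (0:ℝ)..1, (2*x : ℝ) • (g ∘ (fun x : ℝ => x^2)) x)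
      = ∫ t in (0:ℝ)..1, g t := by
    have h := intervalIntegral.integral_comp_smul_deriv''' (a := (0:ℝ)) (b := 1)
      (f := fun x : ℝ => x^2) (f' := fun x : ℝ => 2*x) (g := g)
      ((continuous_pow 2).continuousOn)
      (fun x hx => by
        simpa using ((hasDerivAt_pow 2 x).hasDerivWithinAt (s := Set.Ioi x)))
      (by
        rintro y ⟨x, hx, rfl⟩
        rw [min_eq_left (by norm_num : (0:ℝ) ≤ 1), max_eq_right (by norm_num : (0:ℝ) ≤ 1)] at hx
        have h1 : 0 < x^2 := pow_pos hx.1 2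
        refine ContinuousAt.continuousWithinAt ?_
        refine ContinuousAt.mul ?_ ?_
        · exact Complex.continuousAt_ofReal_cpow_const _ _ (Or.inr h1.ne')
        · have h2 : (1:ℝ) - x^2 ≠ 0 := by nlinarith [hx.1, hx.2]
          have := (Complex.continuousAt_ofReal_cpow_const (1 - x^2) (v-1) (Or.inr h2)).comp
            (f := fun t : ℝ => 1 - t) (x := x^2) (by fun_prop)
          simpa [Function.comp_def] using this)
      (hbeta_int.mono_set him)
      (by
        -- integrability of x ↦ 2x • g(x²) on [[0,1]]
        have hbase : IntegrableOn
            (fun s => (((1 - s^2)^(ν-1/2) : ℝ):ℂ) * (2*(s:ℂ)^(2*m))) (Set.Icc (0:ℝ) 1) :=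
          (intervalIntegrable_iff_integrableOn_Icc_of_le (by norm_num)).mp
            (hFR.mono_set (by
              rw [Set.uIcc_of_le (by norm_num : (0:ℝ) ≤ 1),
                Set.uIcc_of_le (by norm_num : (-1:ℝ) ≤ 1)]
              exact Set.Icc_subset_Icc (by norm_num) le_rfl))
        rw [Set.uIcc_of_le (by norm_num : (0:ℝ) ≤ 1)]
        apply hbase.congr
        have h0 : ∀ᵐ x ∂(volume.restrict (Set.Icc (0:ℝ) 1)), x ≠ 0 :=
          ae_restrict_of_ae (by
            have : (volume {(0:ℝ)}) = 0 := measure_singleton 0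
            filter_upwards [measure_eq_zero_iff_ae_notMem.mp this] with x hx
            simpa using hx)
        filter_upwards [ae_restrict_mem measurableSet_Icc, h0] with x hx hx0
        exact (subst_ptwise ν m x (lt_of_le_of_ne hx.1 (Ne.symm hx0)) hx.2).symm)
    simp only [Function.comp] at h ⊢
    norm_num at h
    simpa [Complex.real_smul] using h
  -- rewrite substituted integrand
  have hsub2 : (∫ x in (0:ℝ)..1, (2*x : ℝ) • (g ∘ (fun x : ℝ => x^2)) x)
      = 2 * ∫ s in (0:ℝ)..1, F s := by
    rw [show (2:ℂ) * ∫ s in (0:ℝ)..1, F s = ∫ s in (0:ℝ)..1, 2 * F s from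
      (intervalIntegral.integral_const_mul 2 F).symm]
    apply intervalIntegral.integral_congr_ae
    have h0 : ∀ᵐ x : ℝ, x ≠ 0 := by
      have : (volume {(0:ℝ)}) = 0 := measure_singleton 0
      filter_upwards [measure_eq_zero_iff_ae_notMem.mp this] with x hx
      simpa using hx
    filter_upwards [h0] with x hx0 hx
    rw [Set.uIoc_of_le (by norm_num : (0:ℝ) ≤ 1)] at hx
    have h1 := subst_ptwise ν m x hx.1 hx.2
    simp only [Function.comp_apply, hg_def, hu_def, hv_def, hF_def]
    rw [h1]
    ring
  -- beta value
  have hGam : (∫ t in (0:ℝ)..1, g t)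
      = Complex.Gamma u * Complex.Gamma v / Complex.Gamma (u+v) := by
    have h := Complex.Gamma_mul_Gamma_eq_betaIntegral hu hv
    have hne : Complex.Gamma (u+v) ≠ 0 :=
      Complex.Gamma_ne_zero_of_re_pos (by simp [Complex.add_re]; linarith [hu, hv])
    have hbi : Complex.betaIntegral u v = ∫ t in (0:ℝ)..1, g t := rfl
    rw [← hbi, eq_div_iff hne, h]
    ring
  have huv : u + v = (((ν+(m:ℝ)+1 : ℝ)):ℂ) := by simp [hu_def, hv_def]; push_cast; ring
  rw [hsplit, heven, ← two_mul, ← hsub2, hsub, hGam, huv,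
    hu_def, hv_def, Complex.Gamma_ofReal, Complex.Gamma_ofReal, Complex.Gamma_ofReal]
  push_cast
  ring

lemma moment_odd (ν : ℝ) (n : ℕ) (hn : Odd n) :
    ∫ s in (-1:ℝ)..1, (((1 - s^2)^(ν-1/2) : ℝ):ℂ) * (s:ℂ)^n = 0 := by
  set F : ℝ → ℂ := fun s => (((1 - s^2)^(ν-1/2) : ℝ):ℂ) * (s:ℂ)^n with hF_def
  have h := intervalIntegral.integral_comp_neg (a := (-1:ℝ)) (b := 1) (f := F)
  simp only [neg_neg] at h
  have h2 : ∀ x : ℝ, F (-x) = - F x := by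
    intro x
    show (((1 - (-x)^2)^(ν-1/2) : ℝ):ℂ) * (((-x : ℝ)):ℂ)^n = _
    rw [neg_sq]
    push_cast
    rw [hn.neg_pow]
    ring
  simp only [h2] at h
  rw [intervalIntegral.integral_neg] at h
  have := neg_eq_self.mp h
  exact this

noncomputable def G (ν : ℝ) (w : ℂ) : ℂ :=
  (((4:ℝ)^(-ν) * Real.sqrt Real.pi : ℝ) : ℂ) *
    ∑' m : ℕ, ((-1 : ℂ)^m * (w/4)^m) / ((m.factorial : ℂ) * ((Real.Gamma (ν + m + 1) : ℝ) : ℂ))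

theorem G_poisson_integral (ν : ℝ) (hν : -(1/2) < ν) (z : ℝ) :
    G ν ((z:ℂ)^2) = (((4:ℝ)^(-ν) / Real.Gamma (ν + 1/2) : ℝ) : ℂ) *
      ∫ s in (-1:ℝ)..1, (((1 - s^2) ^ (ν - 1/2) : ℝ) : ℂ) *
        Complex.exp (Complex.I * z * s) := by
  have hπ : (0:ℝ) < Real.sqrt π := Real.sqrt_pos.mpr Real.pi_pos
  have hΓν : (0:ℝ) < Real.Gamma (ν + 1/2) := Real.Gamma_pos_of_pos (by linarith)
  set μ : Measure ℝ := volume.restrict (Set.Ioc (-1:ℝ) 1) with hμ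
  set F : ℕ → ℝ → ℂ := fun n s =>
    (((1 - s^2) ^ (ν - 1/2) : ℝ) : ℂ) * ((Complex.I * z * s)^n / n.factorial) with hF_def
  -- interval integrability of each term
  have hFint : ∀ n, IntervalIntegrable (F n) volume (-1) 1 := fun n =>
    cMomInt hν (fun s => (Complex.I * z * s)^n / n.factorial) (by fun_prop)
  have hFint' : ∀ n, Integrable (F n) μ := fun n =>
    (intervalIntegrable_iff_integrableOn_Ioc_of_le (by norm_num)).mp (hFint n)
  -- bound for the norms
  have hcIoc : IntegrableOn (fun s : ℝ => (1 - s^2) ^ (ν - 1/2)) (Set.Ioc (-1:ℝ) 1) :=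
    (intervalIntegrable_iff_integrableOn_Ioc_of_le (by norm_num)).mp (cInt hν)
  set cC : ℝ := ∫ s in Set.Ioc (-1:ℝ) 1, (1 - s^2) ^ (ν - 1/2) with hcC
  have hsummable : Summable fun n => ∫ s, ‖F n s‖ ∂μ := by
    apply Summable.of_nonneg_of_le
      (fun n => integral_nonneg (fun s => norm_nonneg _))
      (fun n => ?_) ((Real.summable_pow_div_factorial |z|).mul_left cC)
    have hb : Integrable (fun s : ℝ => (1 - s^2) ^ (ν - 1/2) * (|z|^n / n.factorial)) μ :=
      hcIoc.mul_const _
    have hle : (fun s => ‖F n s‖) ≤ᵐ[μ]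
        fun s : ℝ => (1 - s^2) ^ (ν - 1/2) * (|z|^n / n.factorial) := by
      filter_upwards [ae_restrict_mem measurableSet_Ioc] with s hs
      have hs1 : |s| ≤ 1 := abs_le.mpr ⟨hs.1.le, hs.2⟩
      have hc0 : (0:ℝ) ≤ (1 - s^2) ^ (ν - 1/2) :=
        Real.rpow_nonneg (by nlinarith [abs_nonneg s, sq_abs s]) _
      have hnorm : ‖F n s‖ = (1 - s^2) ^ (ν - 1/2) * ((|z| * |s|)^n / n.factorial) := by
        simp only [hF_def, norm_mul, norm_div, norm_pow, Complex.norm_real, Complex.norm_I,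
          Complex.norm_natCast, Real.norm_eq_abs, one_mul]
        rw [abs_of_nonneg hc0]
      rw [hnorm]
      have hfact : (0:ℝ) < n.factorial := by positivity
      have hpow : (|z| * |s|) ^ n ≤ |z| ^ n :=
        pow_le_pow_left₀ (by positivity) (by nlinarith [abs_nonneg z]) n
      exact mul_le_mul_of_nonneg_left ((div_le_div_iff_of_pos_right hfact).mpr hpow) hc0
    calc ∫ s, ‖F n s‖ ∂μ
        ≤ ∫ s, (1 - s^2) ^ (ν - 1/2) * (|z|^n / n.factorial) ∂μ :=
          integral_mono_ae ((hFint' n).norm) hb hle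
      _ = cC * (|z|^n / n.factorial) := by rw [MeasureTheory.integral_mul_const]
  -- the swap
  have hswap : HasSum (fun n => ∫ s, F n s ∂μ) (∫ s, (∑' n, F n s) ∂μ) :=
    hasSum_integral_of_summable_integral_norm hFint' hsummable
  -- identify the tsum with the exponential
  have hexp : ∀ s : ℝ, (∑' n, F n s) =
      (((1 - s^2) ^ (ν - 1/2) : ℝ) : ℂ) * Complex.exp (Complex.I * z * s) := by
    intro s
    rw [show Complex.exp (Complex.I * z * s) = ∑' n, (Complex.I * z * s)^n / n.factorial by
      rw [Complex.exp_eq_exp_ℂ, NormedSpace.exp_eq_tsum_div]]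
    exact tsum_mul_left
  simp only [hexp] at hswap
  -- value of each integral
  set A : ℕ → ℂ := fun n => ∫ s in (-1:ℝ)..1, (((1 - s^2)^(ν-1/2) : ℝ):ℂ) * (s:ℂ)^n with hA
  have hterm : ∀ n, (∫ s, F n s ∂μ) = ((Complex.I * z)^n / n.factorial) * A n := by
    intro n
    rw [hA, ← intervalIntegral.integral_const_mul,
      ← intervalIntegral.integral_of_le (by norm_num : (-1:ℝ) ≤ 1)]
    apply intervalIntegral.integral_congr
    intro x _
    simp only [hF_def, mul_pow]
    ring
  simp only [hterm] at hswap
  set I : ℂ := ∫ s in (-1:ℝ)..1, (((1 - s^2) ^ (ν - 1/2) : ℝ) : ℂ) *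
      Complex.exp (Complex.I * z * s) with hI
  have hIeq : (∫ s, (((1 - s^2) ^ (ν - 1/2) : ℝ) : ℂ) *
      Complex.exp (Complex.I * z * s) ∂μ) = I := by
    rw [hI, intervalIntegral.integral_of_le (by norm_num : (-1:ℝ) ≤ 1)]
  rw [hIeq] at hswap
  -- extract even terms
  have hzero : ∀ n ∉ Set.range (fun m : ℕ => 2*m),
      ((Complex.I * z)^n / n.factorial) * A n = 0 := by
    intro n hn
    have hodd : Odd n := by
      rcases Nat.even_or_odd n with he | ho
      · exact absurd ⟨n/2, (Nat.two_mul_div_two_of_even he)⟩ hn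
      · exact ho
    simp only [hA]
    rw [moment_odd ν n hodd, mul_zero]
  have heven : HasSum (fun m => ((Complex.I * z)^(2*m) / (2*m).factorial) * A (2*m)) I :=
    (Function.Injective.hasSum_iff (fun a b h => by omega) hzero).mpr hswap
  -- rewrite each even term
  have hK : ((Real.sqrt π * Real.Gamma (ν + 1/2) : ℝ):ℂ) ≠ 0 := by
    simp only [ne_eq, Complex.ofReal_eq_zero]
    positivity
  have hterm2 : ∀ m : ℕ, ((Complex.I * z)^(2*m) / (2*m).factorial) * A (2*m)
      = ((Real.sqrt π * Real.Gamma (ν + 1/2) : ℝ):ℂ) *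
        (((-1 : ℂ)^m * (((z:ℂ)^2/4))^m) /
          ((m.factorial : ℂ) * ((Real.Gamma (ν + m + 1) : ℝ) : ℂ))) := by
    intro m
    simp only [hA]
    rw [moment_even hν m, _root_.Gamma_nat_add_half m]
    have h1 : (Complex.I * z)^(2*m) = (-1:ℂ)^m * ((z:ℂ)^2)^m := by
      rw [pow_mul, show (Complex.I * (z:ℂ))^2 = -((z:ℂ)^2) by
        rw [mul_pow, Complex.I_sq]; ring]
      exact neg_pow _ m
    have hf1 : ((2*m).factorial : ℂ) ≠ 0 := Nat.cast_ne_zero.mpr (Nat.factorial_ne_zero _)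
    have hf2 : ((m).factorial : ℂ) ≠ 0 := Nat.cast_ne_zero.mpr (Nat.factorial_ne_zero _)
    have hf3 : ((Real.Gamma (ν + m + 1) : ℝ):ℂ) ≠ 0 := by
      simp only [ne_eq, Complex.ofReal_eq_zero]
      exact (Real.Gamma_pos_of_pos (by
        have : (0:ℝ) ≤ (m:ℝ) := Nat.cast_nonneg m
        linarith)).ne'
    have hf4 : ((4:ℂ))^m ≠ 0 := pow_ne_zero m (by norm_num)
    rw [h1]
    push_cast
    rw [div_pow]
    field_simp
  simp only [hterm2] at heven
  have hterm3 : HasSum (fun m : ℕ => (((-1 : ℂ)^m * (((z:ℂ)^2/4))^m) /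
      ((m.factorial : ℂ) * ((Real.Gamma (ν + m + 1) : ℝ) : ℂ))))
      (I / ((Real.sqrt π * Real.Gamma (ν + 1/2) : ℝ):ℂ)) := by
    have := heven.div_const ((Real.sqrt π * Real.Gamma (ν + 1/2) : ℝ):ℂ)
    refine this.congr_fun fun m => ?_
    have h1 : ((Real.sqrt π : ℝ):ℂ) ≠ 0 := by exact_mod_cast hπ.ne'
    have h2 : ((Real.Gamma (ν+1/2) : ℝ):ℂ) ≠ 0 := by exact_mod_cast hΓν.ne'
    rw [Complex.ofReal_mul, mul_div_cancel_left₀ _ (mul_ne_zero h1 h2)]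
  have hcoef : ((4:ℝ)^(-ν) * Real.sqrt π : ℝ) / (Real.sqrt π * Real.Gamma (ν+1/2))
      = (4:ℝ)^(-ν) / Real.Gamma (ν+1/2) := by
    rw [div_mul_eq_div_div, mul_div_cancel_right₀ _ hπ.ne']
  rw [G, hterm3.tsum_eq, mul_div_assoc',
    mul_comm (((4:ℝ)^(-ν) * Real.sqrt π : ℝ):ℂ) I, mul_div_assoc, ← Complex.ofReal_div,
    hcoef, mul_comm]
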